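/- Let κ be a cardinal and {A_ξ : ξ < κ} an almost disjoint family of infinite subsets of ℕ. Suppose S : ℓ∞^c(κ) → C(ℕ*) is an isometric embedding (a linear isometry onto its image) satisfying S(1_{{ξ}}) = 1_{[A_ξ]} for every ξ < κ. Then for every countable F ⊆ κ there exists V ⊆ ℕ such that A_ξ ⊆* V for all ξ ∈ F and A_ξ ∩ V =* ∅ for all ξ ∉ F. -/

import Mathlib

set_option synthInstance.maxHeartbeats 400000
set_option maxHeartbeats 1000000

noncomputable section

open Set Filter
open scoped ENNReal

/-- `ℓ∞(κ)`: bounded real-valued functions on `κ` with the sup norm. -/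
abbrev LinfK (κ : Type*) : Type _ := ↥(lp (fun _ : κ => ℝ) ∞)

/-- `ℓ∞^c(κ)`: the subspace of `ℓ∞(κ)` of countably supported functions. -/
def linfc (κ : Type*) : Submodule ℝ (LinfK κ) where
  carrier := {f | (Function.support (⇑f)).Countable}
  add_mem' := by
    intro f g hf hg
    refine Set.Countable.mono ?_ (hf.union hg)
    rw [lp.coeFn_add]
    exact Function.support_add _ _
  zero_mem' := by
    simp [Function.support, lp.coeFn_zero]
  smul_mem' := by
    intro c f hf
    refine Set.Countable.mono ?_ hf
    rw [lp.coeFn_smul]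
    exact Function.support_const_smul_subset c _

/-- The indicator function `1_F` of a countable `F ⊆ κ`, as an element of `ℓ∞^c(κ)`. -/
def indLinfc {κ : Type*} (F : Set κ) (hF : F.Countable) : ↥(linfc κ) :=
  ⟨⟨F.indicator (fun _ => (1 : ℝ)), memℓp_infty ⟨1, by
      rintro x ⟨i, rfl⟩
      by_cases h : i ∈ F
      · simp [Set.indicator_of_mem h]
      · simp [Set.indicator_of_notMem h]⟩⟩,
    Set.Countable.mono (Set.support_indicator_subset) hF⟩

/-- The unit vector `1_{{ξ}}` of `ℓ∞^c(κ)`. -/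
def unitVecC {κ : Type*} (ξ : κ) : ↥(linfc κ) :=
  indLinfc ({ξ} : Set κ) (Set.countable_singleton ξ)

/-- `ℕ* = βℕ \ ℕ`: the space of nonprincipal ultrafilters on `ℕ`. -/
def NStar : Type := {u : Ultrafilter ℕ // ∀ n : ℕ, u ≠ (pure n : Ultrafilter ℕ)}

instance : TopologicalSpace NStar := instTopologicalSpaceSubtype

/-- The clopen subset `[A] ⊆ ℕ*` determined by `A ⊆ ℕ`. -/
def clopenOf (A : Set ℕ) : Set NStar := {u : NStar | A ∈ u.1}

theorem isClopen_clopenOf (A : Set ℕ) : IsClopen (clopenOf A) :=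
  ⟨(ultrafilter_isClosed_basic A).preimage continuous_subtype_val,
   (ultrafilter_isOpen_basic A).preimage continuous_subtype_val⟩

/-- The characteristic function `1_{[A]} ∈ C(ℕ*)`. -/
def indBCF (A : Set ℕ) : BoundedContinuousFunction NStar ℝ :=
  BoundedContinuousFunction.indicator (clopenOf A) (isClopen_clopenOf A)

/-- Every infinite subset of `ℕ` lies in some free ultrafilter. -/
lemma exists_nstar_mem {B : Set ℕ} (hB : B.Infinite) : ∃ u : NStar, B ∈ u.1 := by
  have h1 : (cofinite ⊓ 𝓟 B).NeBot := hB.cofinite_inf_principal_neBot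
  refine ⟨⟨Ultrafilter.of (cofinite ⊓ 𝓟 B), ?_⟩, ?_⟩
  · intro n hn
    have hle : (Ultrafilter.of (cofinite ⊓ 𝓟 B) : Filter ℕ) ≤ cofinite :=
      (Ultrafilter.of_le _).trans inf_le_left
    have h2 : ({n}ᶜ : Set ℕ) ∈ Ultrafilter.of (cofinite ⊓ 𝓟 B) :=
      hle (by rw [mem_cofinite]; simp)
    rw [hn] at h2
    simp at h2
  · exact le_principal_iff.mp ((Ultrafilter.of_le _).trans inf_le_right)

/-- Basic clopen sets form a basis for the topology of `ℕ*`. -/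
lemma exists_basic_subset {U : Set NStar} (hU : IsOpen U) {u : NStar} (hu : u ∈ U) :
    ∃ B : Set ℕ, B ∈ u.1 ∧ clopenOf B ⊆ U := by
  change @IsOpen NStar (TopologicalSpace.induced (Subtype.val : NStar → Ultrafilter ℕ) inferInstance) U at hU
  rw [isOpen_induced_iff] at hU
  obtain ⟨W, hW, rfl⟩ := hU
  obtain ⟨t, ht, hut, htW⟩ := ultrafilterBasis_is_basis.exists_subset_of_mem_open hu hW
  obtain ⟨B, rfl⟩ := ht
  exact ⟨B, hut, fun v hv => htW hv⟩

instance : CompactSpace NStar := by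
  have he : {u : Ultrafilter ℕ | ∀ n : ℕ, u ≠ pure n} =
      ⋂ n : ℕ, {u : Ultrafilter ℕ | ({n}ᶜ : Set ℕ) ∈ u} := by
    ext u
    simp only [Set.mem_setOf_eq, Set.mem_iInter]
    refine forall_congr' fun n => ?_
    rw [Ultrafilter.compl_mem_iff_notMem]
    constructor
    · intro h hmem
      obtain ⟨x, hx, hux⟩ := Ultrafilter.eq_pure_of_finite_mem (Set.finite_singleton n) hmem
      exact h (by rwa [Set.mem_singleton_iff.mp hx] at hux)
    · intro h hn
      exact h (by simp [hn])
  have hcl : IsClosed {u : Ultrafilter ℕ | ∀ n : ℕ, u ≠ pure n} := by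
    rw [he]
    exact isClosed_iInter fun n => ultrafilter_isClosed_basic _
  exact isCompact_iff_compactSpace.mp hcl.isCompact

lemma linfc_norm_le {κ : Type*} (x : ↥(linfc κ)) {C : ℝ} (hC : 0 ≤ C)
    (h : ∀ i, |((x : LinfK κ) : κ → ℝ) i| ≤ C) : ‖x‖ ≤ C := by
  show ‖(x : LinfK κ)‖ ≤ C
  exact lp.norm_le_of_forall_le hC fun i => by simpa [Real.norm_eq_abs] using h i

lemma indLinfc_coe_apply {κ : Type*} {F : Set κ} (hF : F.Countable) (i : κ) :
    ((indLinfc F hF : LinfK κ) : κ → ℝ) i = F.indicator (fun _ => (1 : ℝ)) i := rfl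

/-- if `S : ℓ∞^c(κ) → C(ℕ*)` is an isometric embedding with
`S(1_{{ξ}}) = 1_{[A_ξ]}` for an almost disjoint family `{A_ξ}`, then every countable
`F ⊆ κ` admits a separation `V ⊆ ℕ` with `A_ξ ⊆* V` for `ξ ∈ F` and
`A_ξ ∩ V =* ∅` for `ξ ∉ F`. -/

theorem stmt5 {κ : Type*} (A : κ → Set ℕ) (hinj : Function.Injective A)
    (hAinf : ∀ ξ, (A ξ).Infinite)
    (hAD : ∀ ξ η, ξ ≠ η → (A ξ ∩ A η).Finite)
    (S : ↥(linfc κ) →ₗᵢ[ℝ] BoundedContinuousFunction NStar ℝ)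
    (hS : ∀ ξ, S (unitVecC ξ) = indBCF (A ξ))
    (F : Set κ) (hF : F.Countable) :
    ∃ V : Set ℕ, (∀ ξ ∈ F, (A ξ \ V).Finite) ∧ (∀ ξ ∉ F, (A ξ ∩ V).Finite) := by
  classical
  set g : BoundedContinuousFunction NStar ℝ := S (indLinfc F hF) with hg
  -- g = 1 on [A ξ] for ξ ∈ F (we only need ≥ 1)
  have claim1 : ∀ ξ ∈ F, ∀ u : NStar, u ∈ clopenOf (A ξ) → 1 ≤ g u := by
    intro ξ hξ u hu
    set x : ↥(linfc κ) := indLinfc F hF - (2 : ℝ) • unitVecC ξ with hxdef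
    have hxn : ‖x‖ ≤ 1 := by
      refine linfc_norm_le _ zero_le_one fun i => ?_
      have hco : ((x : LinfK κ) : κ → ℝ) i
          = F.indicator (fun _ => (1 : ℝ)) i
            - 2 * ({ξ} : Set κ).indicator (fun _ => (1 : ℝ)) i := rfl
      rw [hco, Set.indicator_apply, Set.indicator_apply]
      split_ifs <;> simp_all [Set.mem_singleton_iff] <;> norm_num
    have hSx : S x = g - (2 : ℝ) • indBCF (A ξ) := by
      rw [hxdef, map_sub, map_smul, hS, hg]
    have hb : |(S x) u| ≤ 1 := by
      have h1 : ‖(S x) u‖ ≤ ‖S x‖ := BoundedContinuousFunction.norm_coe_le_norm _ u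
      rw [S.norm_map] at h1
      simpa [Real.norm_eq_abs] using h1.trans hxn
    rw [hSx] at hb
    have happ : (g - (2 : ℝ) • indBCF (A ξ)) u = g u - 2 := by
      simp only [BoundedContinuousFunction.coe_sub, BoundedContinuousFunction.coe_smul,
        Pi.sub_apply, Pi.smul_apply, smul_eq_mul]
      have h1 : indBCF (A ξ) u = 1 := by
        show (clopenOf (A ξ)).indicator 1 u = 1
        simp [Set.indicator_of_mem hu]
      rw [h1]; ring
    rw [happ, abs_le] at hb
    linarith [hb.1]
  -- g = 0 on [A ξ] for ξ ∉ F (we only need ≤ 0)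
  have claim2 : ∀ ξ ∉ F, ∀ u : NStar, u ∈ clopenOf (A ξ) → g u ≤ 0 := by
    intro ξ hξ u hu
    set x : ↥(linfc κ) := indLinfc F hF + unitVecC ξ with hxdef
    have hxn : ‖x‖ ≤ 1 := by
      refine linfc_norm_le _ zero_le_one fun i => ?_
      have hco : ((x : LinfK κ) : κ → ℝ) i
          = F.indicator (fun _ => (1 : ℝ)) i
            + ({ξ} : Set κ).indicator (fun _ => (1 : ℝ)) i := rfl
      rw [hco, Set.indicator_apply, Set.indicator_apply]
      split_ifs <;> simp_all [Set.mem_singleton_iff] <;> norm_num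
    have hSx : S x = g + indBCF (A ξ) := by
      rw [hxdef, map_add, hS, hg]
    have hb : |(S x) u| ≤ 1 := by
      have h1 : ‖(S x) u‖ ≤ ‖S x‖ := BoundedContinuousFunction.norm_coe_le_norm _ u
      rw [S.norm_map] at h1
      simpa [Real.norm_eq_abs] using h1.trans hxn
    rw [hSx] at hb
    have happ : (g + indBCF (A ξ)) u = g u + 1 := by
      simp only [BoundedContinuousFunction.coe_add, Pi.add_apply]
      have h1 : indBCF (A ξ) u = 1 := by
        show (clopenOf (A ξ)).indicator 1 u = 1
        simp [Set.indicator_of_mem hu]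
      rw [h1]
    rw [happ, abs_le] at hb
    linarith [hb.2]
  -- the open set and the compact set
  set U : Set NStar := ⇑g ⁻¹' Set.Ioi (1 / 2 : ℝ) with hUdef
  have hUopen : IsOpen U := isOpen_Ioi.preimage g.continuous
  set K : Set NStar := ⇑g ⁻¹' Set.Ici (1 : ℝ) with hKdef
  have hKcl : IsClosed K := isClosed_Ici.preimage g.continuous
  have hKcomp : IsCompact K := hKcl.isCompact
  have hKU : K ⊆ U := fun u hu => by
    simp only [hUdef, hKdef, Set.mem_preimage, Set.mem_Ici, Set.mem_Ioi] at *
    linarith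
  -- cover K by basic clopen subsets of U
  have hBex : ∀ u ∈ K, ∃ B : Set ℕ, B ∈ u.1 ∧ clopenOf B ⊆ U := fun u hu =>
    exists_basic_subset hUopen (hKU hu)
  choose! B hB1 hB2 using hBex
  have hcover : K ⊆ ⋃ u ∈ K, clopenOf (B u) := fun u hu =>
    Set.mem_biUnion hu (hB1 u hu)
  obtain ⟨t, htK, htfin, htcover⟩ :=
    hKcomp.elim_finite_subcover_image (fun u _ => (isClopen_clopenOf (B u)).isOpen) hcover
  refine ⟨⋃ u ∈ t, B u, ?_, ?_⟩
  · -- ξ ∈ F : A ξ ⊆* V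
    intro ξ hξ
    by_contra hinf
    obtain ⟨w, hw⟩ := exists_nstar_mem (hinf : (A ξ \ ⋃ u ∈ t, B u).Infinite)
    have hwA : A ξ ∈ w.1 := mem_of_superset hw Set.diff_subset
    have hwK : w ∈ K := by
      simp only [hKdef, Set.mem_preimage, Set.mem_Ici]
      exact claim1 ξ hξ w hwA
    obtain ⟨u, hu, hwB⟩ := Set.mem_iUnion₂.mp (htcover hwK)
    have hV : (⋃ u ∈ t, B u) ∈ w.1 :=
      mem_of_superset hwB (Set.subset_biUnion_of_mem hu)
    obtain ⟨n, hn⟩ := Ultrafilter.nonempty_of_mem (inter_mem hw hV)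
    exact hn.1.2 hn.2
  · -- ξ ∉ F : A ξ ∩ V =* ∅
    intro ξ hξ
    by_contra hinf
    obtain ⟨w, hw⟩ := exists_nstar_mem (hinf : (A ξ ∩ ⋃ u ∈ t, B u).Infinite)
    have hwA : A ξ ∈ w.1 := mem_of_superset hw Set.inter_subset_left
    have hle : g w ≤ 0 := claim2 ξ hξ w hwA
    have hV : (⋃ u ∈ t, B u) ∈ w.1 := mem_of_superset hw Set.inter_subset_right
    obtain ⟨u, hu, hwB⟩ := (Ultrafilter.finite_biUnion_mem_iff htfin).mp hV
    have hwU : w ∈ U := hB2 u (htK hu) hwB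
    simp only [hUdef, Set.mem_preimage, Set.mem_Ioi] at hwU
    linarith
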